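/- (Lemma 2.4(2)) In the generalized matrix ring setting, let φ : R → R be an additive map satisfying condition (P), and define ψ(U) = φ(U) − φ(1)·U + T·U − U·T where T = e·φ(e)·f + f·φ(f)·e and f = 1 − e. Then ψ also satisfies condition (P): for all U, V ∈ R with UV = 0 and VU = 0, one has ψ(U)V + Vψ(U) + Uψ(V) + ψ(V)U = 0. -/
import Mathlib


set_option maxHeartbeats 1600000 in
theorem psi_satisfies_condition_P
    {R : Type*} [Ring R] (e : R) (he : e * e = e)
    (h2A : ∀ x : R, e * x * e + e * x * e = 0 → e * x * e = 0)
    (h2B : ∀ x : R, (1 - e) * x * (1 - e) + (1 - e) * x * (1 - e) = 0 →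
      (1 - e) * x * (1 - e) = 0)
    (hlf : ∀ a : R, a = e * a * e → (∀ x : R, a * (e * x * (1 - e)) = 0) → a = 0)
    (hrf : ∀ b : R, b = (1 - e) * b * (1 - e) → (∀ x : R, (e * x * (1 - e)) * b = 0) → b = 0)
    (φ : R →+ R)
    (hP : ∀ U V : R, U * V = 0 → V * U = 0 →
      φ U * V + V * φ U + U * φ V + φ V * U = 0)
    (ψ : R → R)
    (hψ : ∀ U : R, ψ U = φ U - φ 1 * U +
      ((e * φ e * (1 - e) + (1 - e) * φ (1 - e) * e) * U -
        U * (e * φ e * (1 - e) + (1 - e) * φ (1 - e) * e))) :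
    ∀ U V : R, U * V = 0 → V * U = 0 →
      ψ U * V + V * ψ U + U * ψ V + ψ V * U = 0 := by
  have hef : e * (1 - e) = 0 := by rw [mul_sub, mul_one, he, sub_self]
  have hfe : (1 - e) * e = 0 := by rw [sub_mul, one_mul, he, sub_self]
  have B1 := hP e (1 - e) hef hfe
  have hS1 : e * φ (1 - e) * e = 0 := h2A _ (by
    linear_combination (norm := noncomm_ring) e * B1 * e + (e * φ e) * he + he * (φ e * e) - he * (φ (1 - e) * e) - (e * φ (1 - e)) * he)
  have hS2 : (1 - e) * φ e * (1 - e) = 0 := h2B _ (by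
    linear_combination (norm := noncomm_ring) (1 - e) * B1 * (1 - e) - (φ e) * he + (φ (1 - e)) * he + (e * φ e) * he - he * (φ e) + he * (φ e * e) + he * (φ (1 - e)) - he * (φ (1 - e) * e) - (e * φ (1 - e)) * he)
  have hS3 : e * φ e * (1 - e) + e * φ (1 - e) * (1 - e) = 0 := by
    linear_combination (norm := noncomm_ring) e * B1 * (1 - e) - (e * φ e) * he + he * (φ e) - he * (φ e * e) - he * (φ (1 - e)) + he * (φ (1 - e) * e) + (e * φ (1 - e)) * he
  have hS4 : (1 - e) * φ e * e + (1 - e) * φ (1 - e) * e = 0 := by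
    linear_combination (norm := noncomm_ring) (1 - e) * B1 * e + (φ e) * he - (φ (1 - e)) * he - (e * φ e) * he - he * (φ e * e) + he * (φ (1 - e) * e) + (e * φ (1 - e)) * he
  have hphi1 : φ 1 = φ e + φ (1 - e) := by
    have h1 : e + (1 - e) = 1 := by abel
    have h2 := map_add φ e (1 - e)
    rw [h1] at h2
    exact h2
  have hzef : e * φ 1 * (1 - e) = 0 := by
    linear_combination (norm := noncomm_ring) hS3 + e * hphi1 * (1 - e)
  have hzfe : (1 - e) * φ 1 * e = 0 := by
    linear_combination (norm := noncomm_ring) hS4 + (1 - e) * hphi1 * e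
  -- key relation on eRf
  have hKey : ∀ x : R, (e * x * (1 - e)) * φ (1 - e) * (1 - e) = e * φ e * (e * x * (1 - e)) := by
    intro x
    have hUV : (e + e * x * (1 - e)) * ((1 - e) - e * x * (1 - e)) = 0 := by
      linear_combination (norm := noncomm_ring) - he - he * (x) + he * (x * e) + (e * x) * he + (e * x) * he * (x) - (e * x) * he * (x * e)
    have hVU : ((1 - e) - e * x * (1 - e)) * (e + e * x * (1 - e)) = 0 := by
      linear_combination (norm := noncomm_ring) - he - he * (x) + he * (x * e) + (e * x) * he + (e * x) * he * (x) - (e * x) * he * (x * e)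
    have hmm0 : (e * x * (1 - e)) * (e * x * (1 - e)) = 0 := by
      linear_combination (norm := noncomm_ring) - (e * x) * he * (x) + (e * x) * he * (x * e)
    have EQ := hP (e + e * x * (1 - e)) ((1 - e) - e * x * (1 - e)) hUV hVU
    rw [map_sub, map_add] at EQ
    have PMM := hP (e * x * (1 - e)) (e * x * (1 - e)) hmm0 hmm0
    linear_combination (norm := noncomm_ring) e * EQ * (1 - e) + e * PMM * (1 - e) - hS3 + (e * x) * hS2 - hS1 * (x * (1 - e)) - (e * φ e) * he + (e * φ e * e * x) * he - 2 * (e * φ (e * x * (1 - e))) * he + he * (φ e) - he * (φ e * e) + 2 * he * (φ (e * x * (1 - e))) - 2 * he * (φ (e * x * (1 - e)) * e) + he * (x * φ e) - he * (x * φ e * e) - he * (x * e * φ e) + he * (x * e * φ e * e) - he * (φ (1 - e)) + he * (φ (1 - e) * e) - he * (x * φ (1 - e)) + he * (x * φ (1 - e) * e) + he * (x * e * φ (1 - e)) - he * (x * e * φ (1 - e) * e) + (e * φ (1 - e)) * he - (e * φ (1 - e) * e * x) * he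
  -- key relation on fRe
  have hKey2 : ∀ x : R, (1 - e) * φ (1 - e) * (1 - e) * ((1 - e) * x * e) = ((1 - e) * x * e) * (e * φ e * e) := by
    intro x
    have hUV : ((1 - e) + (1 - e) * x * e) * (e - (1 - e) * x * e) = 0 := by
      linear_combination (norm := noncomm_ring) - he - he * (x * e) + (x) * he + (x) * he * (x * e) - (e * x) * he - (e * x) * he * (x * e)
    have hVU : (e - (1 - e) * x * e) * ((1 - e) + (1 - e) * x * e) = 0 := by
      linear_combination (norm := noncomm_ring) - he - he * (x * e) + (x) * he + (x) * he * (x * e) - (e * x) * he - (e * x) * he * (x * e)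
    have hnn0 : ((1 - e) * x * e) * ((1 - e) * x * e) = 0 := by
      linear_combination (norm := noncomm_ring) - (x) * he * (x * e) + (e * x) * he * (x * e)
    have EQ2 := hP ((1 - e) + (1 - e) * x * e) (e - (1 - e) * x * e) hUV hVU
    rw [map_sub, map_add] at EQ2
    have PNN := hP ((1 - e) * x * e) ((1 - e) * x * e) hnn0 hnn0
    linear_combination (norm := noncomm_ring) - (1 - e) * EQ2 * e - (1 - e) * PNN * e + hS4 + hS2 * (x * e) - ((1 - e) * x) * hS1 + (φ (1 - e)) * he * (x * e) - (e * φ (1 - e)) * he * (x * e) - (x) * he * (φ e * e) + (e * x) * he * (φ e * e) + (φ (1 - e)) * he - (φ (1 - e) * x) * he + (φ (1 - e) * e * x) * he + 2 * (φ ((1 - e) * x * e)) * he - (φ e) * he + (φ e * x) * he - (φ e * e * x) * he - (e * φ (1 - e)) * he + (e * φ (1 - e) * x) * he - (e * φ (1 - e) * e * x) * he - 2 * (e * φ ((1 - e) * x * e)) * he - he * (φ (1 - e) * e) - 2 * he * (φ ((1 - e) * x * e) * e) - he * (x * e * φ (1 - e) * e) + he * (φ e * e) + he * (x * e * φ e *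 e) + (e * φ e) * he - (e * φ e * x) * he + (e * φ e * e * x) * he
  -- hi : eφ(1)e acts on eRf like fφ(1)f
  have hi : ∀ x : R, e * φ 1 * e * (e * x * (1 - e)) = e * x * (1 - e) * ((1 - e) * φ 1 * (1 - e)) := by
    intro x
    linear_combination (norm := noncomm_ring) - hKey x + hS1 * (x * (1 - e)) - (e * x) * hS2 + e * hphi1 * (e * (e * x * (1 - e))) - (e * x * (1 - e) * (1 - e)) * hphi1 * (1 - e) + (e * φ e) * he * (x) - (e * φ e) * he * (x * e) + (e * φ (1 - e)) * he * (x) - (e * φ (1 - e)) * he * (x * e) - (e * x) * he * (φ e) + (e * x) * he * (φ e * e) - (e * x) * he * (φ (1 - e)) + (e * x) * he * (φ (1 - e) * e)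
  have hi2 : ∀ x : R, (1 - e) * φ 1 * (1 - e) * ((1 - e) * x * e) = (1 - e) * x * e * (e * φ 1 * e) := by
    intro x
    linear_combination (norm := noncomm_ring) hKey2 x + hS2 * (x * e) - ((1 - e) * x) * hS1 + (1 - e) * hphi1 * ((1 - e) * ((1 - e) * x * e)) - ((1 - e) * x * e * e) * hphi1 * e + (φ e) * he * (x * e) - (e * φ e) * he * (x * e) - (x) * he * (φ (1 - e) * e) + (e * x) * he * (φ (1 - e) * e)
  -- eφ(1)e is central in eRe
  have hiA : ∀ y : R, e * φ 1 * e * (e * y * e) = e * y * e * (e * φ 1 * e) := by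
    intro y
    have h0 := hlf (e * φ 1 * e * (e * y * e) - e * y * e * (e * φ 1 * e))
      (by linear_combination (norm := noncomm_ring) (e * φ 1) * he * (y * e) - (e * y) * he * (φ 1 * e) - he * (φ 1 * e * e * y * e * e) + he * (y * e * e * φ 1 * e * e) - (e * φ 1) * he * (y * e * e) + (e * y) * he * (φ 1 * e * e) - (e * φ 1 * e * y) * he + (e * y * e * φ 1) * he)
      (fun x => by
        linear_combination (norm := noncomm_ring) hi (y * e * x) - (e * y * e) * hi x + (e * φ 1) * he * (y * e * e * x) - (e * φ 1) * he * (y * e * e * x * e) - (e * φ 1) * he * (y * e * x) + (e * φ 1) * he * (y * e * x * e) - (e * y) * he * (x * φ 1) + (e * y) * he * (x * φ 1 * e) + 2 * (e * y) * he * (x * e * φ 1) - 2 * (e * y) * he * (x * e * φ 1 * e) - (e * y) * he * (x * e * e * φ 1) + (e * y) * he * (x * e * e * φ 1 * e) + (e * φ 1 * e * y) * he * (x) - (e * φ 1 * e * y) * he * (x * e))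
    linear_combination (norm := noncomm_ring) h0
  -- fφ(1)f is central in fRf
  have hiB : ∀ y : R, (1 - e) * φ 1 * (1 - e) * ((1 - e) * y * (1 - e)) = (1 - e) * y * (1 - e) * ((1 - e) * φ 1 * (1 - e)) := by
    intro y
    have h0 := hrf ((1 - e) * φ 1 * (1 - e) * ((1 - e) * y * (1 - e)) - (1 - e) * y * (1 - e) * ((1 - e) * φ 1 * (1 - e)))
      (by linear_combination (norm := noncomm_ring) (φ 1) * he * (y * e) - (e * φ 1) * he * (y * e) - (y) * he * (φ 1 * e) + (e * y) * he * (φ 1 * e) - (φ 1 * y) * he + (φ 1 * e * y) * he - (φ 1) * he * (y * e * e) + (e * φ 1 * y) * he - (e * φ 1 * e * y) * he + (e * φ 1) * he * (y * e * e) + (y * φ 1) * he - (y * e * φ 1) * he + (y) * he * (φ 1 * e * e) - (e * y * φ 1) * he + (e * y * e * φ 1) * he - (e * y) * he * (φ 1 * e * e) - he * (φ 1 * y) + 2 * he * (φ 1 * y * e) - he * (φ 1 * y * e * e) + 2 * he * (φ 1 * e * y) - 4 * he * (φ 1 * e * y * e) + 2 * he * (φ 1 * e * y * e * e) - he * (φ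 1 * e * e * y) + 2 * he * (φ 1 * e * e * y * e) - he * (φ 1 * e * e * y * e * e) + he * (y * φ 1) - 2 * he * (y * φ 1 * e) + he * (y * φ 1 * e * e) - 2 * he * (y * e * φ 1) + 4 * he * (y * e * φ 1 * e) - 2 * he * (y * e * φ 1 * e * e) + he * (y * e * e * φ 1) - 2 * he * (y * e * e * φ 1 * e) + he * (y * e * e * φ 1 * e * e))
      (fun x => by
        linear_combination (norm := noncomm_ring) - hi x * ((1 - e) * y * (1 - e)) + hi (x * (1 - e) * y) - (e * x) * he * (y * φ 1) + (e * x) * he * (y * φ 1 * e) + 2 * (e * x) * he * (y * e * φ 1) - 2 * (e * x) * he * (y * e * φ 1 * e) - (e * x) * he * (y * e * e * φ 1) + (e * x) * he * (y * e * e * φ 1 * e) - (e * φ 1) * he * (x * e * y) + (e * φ 1) * he * (x * e * y * e) + (e * φ 1) * he * (x * e * e * y) - (e * φ 1) * he * (x * e * e * y * e) + (e * φ 1 * e * x) * he * (y) - (e * φ 1 * e * x) * he * (y * e))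
    linear_combination (norm := noncomm_ring) h0
  -- φ(1) is central
  have hz : ∀ x : R, φ 1 * x = x * φ 1 := by
    intro x
    linear_combination (norm := noncomm_ring) hiA x + hi x + hi2 x + hiB x + hzef * x + hzfe * x - x * hzef - x * hzfe - (φ 1) * he * (x) + (x) * he * (φ 1)
  -- conclusion
  intro U V hUV hVU
  have key := hP U V hUV hVU
  rw [hψ U, hψ V]
  linear_combination (norm := noncomm_ring) key - φ 1 * hUV - φ 1 * hVU - V * hz U - hVU * φ 1 - U * hz V - hUV * φ 1 + (e * φ e * (1 - e) + (1 - e) * φ (1 - e) * e) * hUV - hVU * (e * φ e * (1 - e) + (1 - e) * φ (1 - e) * e) - hUV * (e * φ e * (1 - e) + (1 - e) * φ (1 - e) * e) + (e * φ e * (1 - e) + (1 - e) * φ (1 - e) * e) * hVU
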